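/- Let K be a closed convex cone in a finite-dimensional real inner product space V, with nonempty interior and K ≠ V. Let L = {w ∈ V : ⟨w, u⟩ ≥ 0 for all u ∈ K} be its dual cone (under the inner product identification). Then L meets the interior of K; i.e., there exists λ₀ in the interior of K such that ⟨λ₀, u⟩ ≥ 0 for every u ∈ K. -/
import Mathlib


open scoped RealInnerProductSpace

/-- a closed convex cone `K ≠ V` with nonempty interior in a
finite-dimensional real inner product space meets its dual cone in its
interior: there is `λ₀ ∈ int K` with `⟨λ₀,u⟩ ≥ 0` for all `u ∈ K`. -/
theorem stmt10 {V : Type*} [NormedAddCommGroup V] [InnerProductSpace ℝ V]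
    [FiniteDimensional ℝ V]
    (K : Set V) (hK : IsClosed K) (hconv : Convex ℝ K)
    (hcone : ∀ t : ℝ, 0 < t → ∀ v ∈ K, t • v ∈ K)
    (hint : (interior K).Nonempty) (hne : K ≠ Set.univ) :
    ∃ l₀ ∈ interior K, ∀ u ∈ K, 0 ≤ (⟪l₀, u⟫ : ℝ) := by
  by_contra hcontra
  push_neg at hcontra
  set L : Set V := {w | ∀ u ∈ K, 0 ≤ (⟪w, u⟫ : ℝ)} with hLdef
  have hdisj : Disjoint (interior K) L := by
    rw [Set.disjoint_left]
    intro x hx hxL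
    obtain ⟨u, hu, hlt⟩ := hcontra x hx
    exact absurd (hxL u hu) (not_le.mpr hlt)
  have hLconv : Convex ℝ L := by
    intro x hx y hy a b ha hb hab u hu
    have hx' := hx u hu
    have hy' := hy u hu
    simp only [inner_add_left, inner_smul_left, RCLike.ofReal_real_eq_id, id] at *
    positivity
  obtain ⟨f, c, hf1, hf2⟩ :=
    geometric_hahn_banach_open hconv.interior isOpen_interior hLconv hdisj
  have h0L : (0 : V) ∈ L := by
    intro u hu
    simp
  have hc0 : c ≤ 0 := by simpa using hf2 0 h0L
  obtain ⟨x₀, hx₀⟩ := hint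
  -- f ≤ c (hence ≤ 0) on K by a limit argument along the open segment to x₀
  have hfK : ∀ u ∈ K, f u ≤ 0 := by
    intro u hu
    have hev : ∀ᶠ ε in nhdsWithin (0:ℝ) (Set.Ioi 0),
        ε * f x₀ + (1 - ε) * f u ≤ c := by
      have h1 : ∀ᶠ ε in nhdsWithin (0:ℝ) (Set.Ioi 0), ε < 1 :=
        Filter.Eventually.filter_mono nhdsWithin_le_nhds
          (eventually_lt_nhds (by norm_num : (0:ℝ) < 1))
      filter_upwards [self_mem_nhdsWithin, h1] with ε hε hε1
      have hmem : ε • x₀ + (1 - ε) • u ∈ interior K :=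
        hconv.combo_interior_self_mem_interior hx₀ hu hε (by linarith) (by ring)
      have := hf1 _ hmem
      simpa [map_add, map_smul, smul_eq_mul] using this.le
    have htend : Filter.Tendsto (fun ε : ℝ => ε * f x₀ + (1 - ε) * f u)
        (nhdsWithin (0:ℝ) (Set.Ioi 0)) (nhds (f u)) := by
      have hcont : Filter.Tendsto (fun ε : ℝ => ε * f x₀ + (1 - ε) * f u)
          (nhds 0) (nhds (0 * f x₀ + (1 - 0) * f u)) := by
        exact (Continuous.tendsto (by continuity) 0)
      simpa using hcont.mono_left nhdsWithin_le_nhds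
    have := le_of_tendsto htend hev
    linarith
  -- f ≥ 0 on L
  have hfL : ∀ w ∈ L, 0 ≤ f w := by
    intro w hw
    by_contra hneg
    push_neg at hneg
    set t : ℝ := (c - 1) / f w with ht
    have htpos : 0 < t := div_pos_of_neg_of_neg (by linarith) hneg
    have htw : t • w ∈ L := by
      intro u hu
      have := hw u hu
      rw [real_inner_smul_left]
      exact mul_nonneg htpos.le this
    have := hf2 _ htw
    rw [map_smul] at this
    simp only [smul_eq_mul, ht] at this
    rw [div_mul_cancel₀ _ (ne_of_lt hneg)] at this
    linarith
  -- Riesz representation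
  set l₁ : V := (InnerProductSpace.toDual ℝ V).symm f with hl₁
  have hrep : ∀ x : V, (⟪l₁, x⟫ : ℝ) = f x := fun x =>
    InnerProductSpace.toDual_symm_apply
  have hmemL : -l₁ ∈ L := by
    intro u hu
    rw [inner_neg_left, hrep]
    linarith [hfK u hu]
  have hnn := hfL _ hmemL
  rw [← hrep, inner_neg_right, real_inner_self_eq_norm_sq] at hnn
  have hl0 : l₁ = 0 := by
    have : ‖l₁‖ = 0 := by nlinarith [norm_nonneg l₁]
    simpa using this
  have := hf1 x₀ hx₀
  rw [← hrep, hl0] at this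
  simp at this
  linarith
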